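/- Let U_0, …, U_d be a decomposition of V and let A : V → V be a linear map such that (A − q^{2i−d}I)U_i ⊆ U_{i+1} for 0 ≤ i ≤ d (where U_{d+1} = 0). For 0 ≤ j ≤ d let V_j denote the eigenspace of A for the eigenvalue q^{2j−d}. Then for every i with 0 ≤ i ≤ d one has V_i + V_{i+1} + ⋯ + V_d = U_i + U_{i+1} + ⋯ + U_d. -/

import Mathlib

noncomputable section

open Polynomial

/-- Induction principle for membership in `⨆ j, ⨆ _ : p j, U j`. -/
lemma iSupCondInduction {K W : Type*} [Field K] [AddCommGroup W] [Module K W]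
    (p : ℕ → Prop) (U : ℕ → Submodule K W) {C : W → Prop} {x : W}
    (hx : x ∈ ⨆ j, ⨆ _ : p j, U j)
    (mem : ∀ j, p j → ∀ y ∈ U j, C y) (zero : C 0)
    (add : ∀ y z, C y → C z → C (y + z)) : C x := by
  refine Submodule.iSup_induction (motive := C) _ hx (fun j y hy => ?_) zero add
  rcases Classical.em (p j) with h | h
  · exact mem j h y (by simpa [iSup_pos h] using hy)
  · rw [iSup_neg h] at hy
    simpa [(Submodule.mem_bot K).mp hy] using zero

theorem aux5 {K : Type*} [Field K]
    {V : Type*} [AddCommGroup V] [Module K V]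
    (d : ℕ) (U : ℕ → Submodule K V)
    (hUbot : ∀ i, d < i → U i = ⊥)
    (hUtop : (⨆ i, U i) = ⊤)
    (hUdisj : ∀ i, Disjoint (U i) (⨆ j, ⨆ _ : j ≠ i, U j))
    (θ : ℕ → K) (hθne : ∀ k j : ℕ, k < j → θ j ≠ θ k)
    (A : Module.End K V)
    (hA : ∀ i, i ≤ d → ∀ u ∈ U i, A u - θ i • u ∈ U (i + 1)) :
    ∀ i,
      (⨆ j, ⨆ _ : i ≤ j ∧ j ≤ d, Module.End.eigenspace A (θ j)) =
        ⨆ j, ⨆ _ : i ≤ j ∧ j ≤ d, U j := by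
  set T : ℕ → Submodule K V := fun i => ⨆ j, ⨆ _ : i ≤ j ∧ j ≤ d, U j with hTdef
  set S : ℕ → Submodule K V :=
    fun i => ⨆ j, ⨆ _ : i ≤ j ∧ j ≤ d, Module.End.eigenspace A (θ j) with hSdef
  show ∀ i, S i = T i
  -- basic inclusions
  have hUT : ∀ {i j : ℕ}, i ≤ j → j ≤ d → U j ≤ T i := by
    intro i j hij hjd
    exact le_iSup_of_le j (le_iSup_of_le ⟨hij, hjd⟩ le_rfl)
  have hES : ∀ {i j : ℕ}, i ≤ j → j ≤ d → Module.End.eigenspace A (θ j) ≤ S i := by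
    intro i j hij hjd
    exact le_iSup_of_le j (le_iSup_of_le ⟨hij, hjd⟩ le_rfl)
  have hTmono : ∀ {i k : ℕ}, i ≤ k → T k ≤ T i := by
    intro i k hik
    exact iSup₂_le fun j hj => hUT (hik.trans hj.1) hj.2
  have hSmono : ∀ {i k : ℕ}, i ≤ k → S k ≤ S i := by
    intro i k hik
    exact iSup₂_le fun j hj => hES (hik.trans hj.1) hj.2
  have hTbot : ∀ {i : ℕ}, d < i → T i = ⊥ := by
    intro i hi
    refine le_bot_iff.mp (iSup₂_le fun j hj => ?_)
    exact absurd hj (by omega)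
  have hT0 : T 0 = ⊤ := by
    rw [← top_le_iff, ← hUtop]
    refine iSup_le fun j => ?_
    rcases le_or_gt j d with h | h
    · exact hUT (Nat.zero_le j) h
    · rw [hUbot j h]; exact bot_le
  -- (A - θ i) maps T i into T (i+1)
  have hAstepT : ∀ i, i ≤ d → ∀ v ∈ T i, A v - θ i • v ∈ T (i + 1) := by
    intro i hid v hv
    refine iSupCondInduction (C := fun y => A y - θ i • y ∈ T (i + 1)) _ _ hv
      (fun j hj y hy => ?_) (by simpa using zero_mem (T (i+1))) (fun y z hy hz => ?_)
    · show A y - θ i • y ∈ T (i + 1)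
      have h1 : A y - θ j • y ∈ U (j + 1) := hA j hj.2 y hy
      have heq : A y - θ i • y = (A y - θ j • y) + (θ j - θ i) • y := by
        rw [sub_smul]; abel
      rw [heq]
      have hm1 : A y - θ j • y ∈ T (i + 1) := by
        rcases le_or_gt (j + 1) d with h | h
        · exact hUT (by omega) h h1
        · have : U (j + 1) = ⊥ := hUbot _ (by omega)
          rw [this] at h1
          simpa [(Submodule.mem_bot K).mp h1] using zero_mem (T (i+1))
      refine add_mem hm1 ?_
      rcases eq_or_lt_of_le hj.1 with h | h
      · simp [← h]
      · exact Submodule.smul_mem _ _ (hUT h hj.2 hy)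
    · show A (y + z) - θ i • (y + z) ∈ T (i + 1)
      have heq : A (y + z) - θ i • (y + z) = (A y - θ i • y) + (A z - θ i • z) := by
        rw [map_add, smul_add]; abel
      rw [heq]; exact add_mem hy hz
  have hTstable : ∀ i, ∀ v ∈ T i, A v ∈ T i := by
    intro i v hv
    rcases le_or_gt i d with hi | hi
    · have h1 := hAstepT i hi v hv
      have heq : A v = (A v - θ i • v) + θ i • v := by abel
      rw [heq]
      exact add_mem (hTmono (Nat.le_succ i) h1) (Submodule.smul_mem _ _ hv)
    · rw [hTbot hi] at hv ⊢
      simp [(Submodule.mem_bot K).mp hv]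
  have hSstable : ∀ i, ∀ v ∈ S i, A v ∈ S i := by
    intro i v hv
    refine iSupCondInduction (C := fun y => A y ∈ S i) _ _ hv (fun j hj y hy => ?_)
      (by simpa using zero_mem (S i))
      (fun y z hy hz => by show A (y + z) ∈ S i; rw [map_add]; exact add_mem hy hz)
    show A y ∈ S i
    rw [Module.End.mem_eigenspace_iff.mp hy]
    exact Submodule.smul_mem _ _ (hES hj.1 hj.2 hy)
  have hSpoly : ∀ i (g : K[X]), ∀ v ∈ S i, Polynomial.aeval A g v ∈ S i := by
    intro i g
    induction g using Polynomial.induction_on with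
    | C a =>
      intro v hv
      simpa [Module.algebraMap_end_apply] using Submodule.smul_mem (S i) a hv
    | add p q hp hq =>
      intro v hv
      rw [map_add, LinearMap.add_apply]
      exact add_mem (hp v hv) (hq v hv)
    | monomial n a hm =>
      intro v hv
      have heq : (Polynomial.C a * Polynomial.X ^ (n + 1) : K[X])
          = (Polynomial.C a * Polynomial.X ^ n) * Polynomial.X := by ring
      rw [heq, map_mul, Module.End.mul_apply, Polynomial.aeval_X]
      exact hm (A v) (hSstable i v hv)
  -- direction S ≤ T
  have hE_T : ∀ j, j ≤ d → Module.End.eigenspace A (θ j) ≤ T j := by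
    intro j hjd
    suffices hcl : ∀ k, k ≤ j → Module.End.eigenspace A (θ j) ≤ T k from hcl j le_rfl
    intro k
    induction k with
    | zero => intro _; rw [hT0]; exact le_top
    | succ k ih =>
      intro hk v hv
      have hvk : v ∈ T k := ih (by omega) hv
      have hsplit : T k ≤ U k ⊔ T (k + 1) := by
        refine iSup₂_le fun m hm => ?_
        rcases eq_or_lt_of_le hm.1 with h | h
        · rw [← h]; exact le_sup_left
        · exact le_sup_of_le_right (hUT h hm.2)
      obtain ⟨u, hu, w, hw, huw⟩ := Submodule.mem_sup.mp (hsplit hvk)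
      have hAv : A v = θ j • v := Module.End.mem_eigenspace_iff.mp hv
      have key : A u + A w = θ j • u + θ j • w := by
        have h := hAv
        rw [← huw, map_add, smul_add] at h
        exact h
      have h1 : A u - θ k • u ∈ T (k + 1) := hUT le_rfl (by omega) (hA k (by omega) u hu)
      have h2 : A w - θ j • w ∈ T (k + 1) :=
        sub_mem (hTstable _ w hw) (Submodule.smul_mem _ _ hw)
      have hx : (θ j - θ k) • u ∈ T (k + 1) := by
        have heq : (θ j - θ k) • u = (A u - θ k • u) + (A w - θ j • w) := by
          rw [sub_smul]
          calc θ j • u - θ k • u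
              = (θ j • u + θ j • w) - θ k • u - θ j • w := by abel
            _ = (A u + A w) - θ k • u - θ j • w := by rw [key]
            _ = (A u - θ k • u) + (A w - θ j • w) := by abel
        rw [heq]; exact add_mem h1 h2
      have hTsub : T (k + 1) ≤ ⨆ m, ⨆ _ : m ≠ k, U m := by
        refine iSup₂_le fun m hm => ?_
        exact le_iSup_of_le m (le_iSup_of_le (by omega) le_rfl)
      have hu0 : (θ j - θ k) • u = 0 :=
        Submodule.disjoint_def.mp (hUdisj k) _ (Submodule.smul_mem _ _ hu) (hTsub hx)
      have hu0' : u = 0 := by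
        rcases smul_eq_zero.mp hu0 with h | h
        · exact absurd h (sub_ne_zero.mpr (hθne k j (by omega)))
        · exact h
      rw [← huw, hu0', zero_add]
      exact hw
  have hST : ∀ i, S i ≤ T i := by
    intro i
    exact iSup₂_le fun j hj => (hE_T j hj.2).trans (hTmono hj.1)
  -- direction T ≤ S
  have hTS : ∀ t i, d < i + t → T i ≤ S i := by
    intro t
    induction t with
    | zero => intro i hi; rw [hTbot (by omega)]; exact bot_le
    | succ t ih =>
      intro i hi
      rcases lt_or_ge d i with hdi | hid
      · rw [hTbot hdi]; exact bot_le
      have ih' : T (i + 1) ≤ S (i + 1) := ih (i + 1) (by omega)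
      intro v hv
      set p : K[X] := ∏ j ∈ Finset.Icc (i + 1) d, (Polynomial.X - Polynomial.C (θ j)) with hpdef
      have hXC : ∀ (a : K) (x : V), Polynomial.aeval A (Polynomial.X - Polynomial.C a) x
          = A x - a • x := by
        intro a x
        simp [Module.algebraMap_end_apply]
      have hkill : ∀ x ∈ S (i + 1), Polynomial.aeval A p x = 0 := by
        intro x hx
        refine iSupCondInduction (C := fun y => Polynomial.aeval A p y = 0) _ _ hx
          (fun j hj y hy => ?_) (map_zero _)
          (fun y z hy hz => by
            show Polynomial.aeval A p (y + z) = 0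
            rw [map_add, hy, hz, add_zero])
        show Polynomial.aeval A p y = 0
        have hjmem : j ∈ Finset.Icc (i + 1) d := Finset.mem_Icc.mpr hj
        have hp : p = (∏ m ∈ (Finset.Icc (i + 1) d).erase j,
            (Polynomial.X - Polynomial.C (θ m))) * (Polynomial.X - Polynomial.C (θ j)) := by
          rw [hpdef]
          exact (Finset.prod_erase_mul _ _ hjmem).symm
        rw [hp, map_mul, Module.End.mul_apply, hXC,
          Module.End.mem_eigenspace_iff.mp hy, sub_self, map_zero]
      have heval : p.eval (θ i) ≠ 0 := by
        rw [hpdef, Polynomial.eval_prod]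
        refine Finset.prod_ne_zero_iff.mpr fun j hj => ?_
        rw [Polynomial.eval_sub, Polynomial.eval_X, Polynomial.eval_C]
        rw [Finset.mem_Icc] at hj
        exact sub_ne_zero.mpr (hθne i j (by omega)).symm
      obtain ⟨g, hg⟩ : (Polynomial.X - Polynomial.C (θ i)) ∣ (p - Polynomial.C (p.eval (θ i))) := by
        apply Polynomial.dvd_iff_isRoot.mpr
        simp [Polynomial.IsRoot]
      have hAv1 : A v - θ i • v ∈ S (i + 1) := ih' (hAstepT i hid v hv)
      have hgterm : Polynomial.aeval A g (A v - θ i • v) ∈ S (i + 1) :=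
        hSpoly (i + 1) g _ hAv1
      have hPv : Polynomial.aeval A p v
          = (p.eval (θ i)) • v + Polynomial.aeval A g (A v - θ i • v) := by
        have hp2 : p = Polynomial.C (p.eval (θ i)) + g * (Polynomial.X - Polynomial.C (θ i)) := by
          rw [mul_comm, ← hg]; ring
        rw [hp2, map_add, LinearMap.add_apply, map_mul, Module.End.mul_apply, hXC,
          Polynomial.aeval_C, Module.algebraMap_end_apply]
        simp
      have hcomm : A (Polynomial.aeval A p v) = Polynomial.aeval A p (A v) := by
        have hmul : Polynomial.aeval A (Polynomial.X * p) = Polynomial.aeval A (p * Polynomial.X) := by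
          rw [mul_comm]
        rw [map_mul, map_mul, Polynomial.aeval_X] at hmul
        calc A ((Polynomial.aeval A p) v) = (A * Polynomial.aeval A p) v := rfl
          _ = ((Polynomial.aeval A p) * A) v := by rw [hmul]
          _ = (Polynomial.aeval A p) (A v) := rfl
      have heig : Polynomial.aeval A p v ∈ Module.End.eigenspace A (θ i) := by
        rw [Module.End.mem_eigenspace_iff]
        have h0 : Polynomial.aeval A p (A v - θ i • v) = 0 := hkill _ hAv1
        rw [map_sub, map_smul, ← hcomm] at h0
        exact sub_eq_zero.mp h0
      have hfin : v = (p.eval (θ i))⁻¹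
          • (Polynomial.aeval A p v - Polynomial.aeval A g (A v - θ i • v)) := by
        rw [hPv, add_sub_cancel_right, smul_smul, inv_mul_cancel₀ heval, one_smul]
      rw [hfin]
      exact Submodule.smul_mem _ _
        (sub_mem (hES le_rfl hid heig) (hSmono (Nat.le_succ i) hgterm))
  intro i
  exact le_antisymm (hST i) (hTS (d + 1) i (by omega))


/-- `U 0, …, U d` is a decomposition of `V` with diameter `d`: the `U i` with `i ≤ d` are nonzero,
`U i = 0` for `i > d`, and `V` is the (internal) direct sum of the `U i`. -/
def IsDecomposition {K V : Type*} [Field K] [AddCommGroup V] [Module K V]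
    (d : ℕ) (U : ℕ → Submodule K V) : Prop :=
  (∀ i, i ≤ d → U i ≠ ⊥) ∧ (∀ i, d < i → U i = ⊥) ∧
  (⨆ i, U i) = ⊤ ∧
  ∀ i, Disjoint (U i) (⨆ j, ⨆ _ : j ≠ i, U j)

/-- Lemma 6.8(i): if `(A − q^{2i−d} I) U_i ⊆ U_{i+1}` for `0 ≤ i ≤ d`, and `V_j`
denotes the eigenspace of `A` for `q^{2j−d}`, then `V_i + ⋯ + V_d = U_i + ⋯ + U_d` for
`0 ≤ i ≤ d`. -/
theorem statement5 {K : Type*} [Field K] [IsAlgClosed K] [CharZero K]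
    (q : K) (hq : q ≠ 0) (hq1 : ∀ n : ℕ, 0 < n → q ^ n ≠ 1)
    {V : Type*} [AddCommGroup V] [Module K V] [FiniteDimensional K V]
    (d : ℕ) (U : ℕ → Submodule K V) (hU : IsDecomposition d U)
    (A : Module.End K V)
    (hA : ∀ i, i ≤ d → ∀ u ∈ U i, A u - q ^ (2 * (i : ℤ) - d) • u ∈ U (i + 1)) :
    ∀ i, i ≤ d →
      (⨆ j, ⨆ _ : i ≤ j ∧ j ≤ d, Module.End.eigenspace A (q ^ (2 * (j : ℤ) - d))) =
        ⨆ j, ⨆ _ : i ≤ j ∧ j ≤ d, U j := by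
  obtain ⟨-, hUbot, hUtop, hUdisj⟩ := hU
  have hθne : ∀ k j : ℕ, k < j →
      q ^ (2 * (j : ℤ) - d) ≠ q ^ (2 * (k : ℤ) - d) := by
    intro k j hkj h
    have e : (2 * (j : ℤ) - d) = (2 * (k : ℤ) - d) + ((2 * (j - k) : ℕ) : ℤ) := by
      push_cast; omega
    rw [e, zpow_add₀ hq, zpow_natCast] at h
    have h2 : q ^ (2 * (k : ℤ) - d) * q ^ (2 * (j - k)) = q ^ (2 * (k : ℤ) - d) * 1 := by
      rw [mul_one]; exact h
    exact hq1 (2 * (j - k)) (by omega) (mul_left_cancel₀ (zpow_ne_zero _ hq) h2)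
  intro i _
  exact aux5 d U hUbot hUtop hUdisj (fun j => q ^ (2 * (j : ℤ) - d)) hθne A hA i
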